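/- arXiv:2111.01177 — 4 statements merged into one kernel-verified Lean document; each statement's English description precedes it below -/
import Mathlib

section
/- (Privacy of DP-Sinkhorn's sanitized gradient release, quantitative core of Theorem 1.) Let n, d be natural numbers, Δ > 0, σ > 0, and let α > 1 be real. Let G, G' : Fin n → (Fin d → ℝ) be two gradient matrices whose rows are clipped, i.e. ‖G_i‖₂ ≤ Δ and ‖G'_i‖₂ ≤ Δ for every i < n. For each row i and coordinate j, let p_{G_{ij}, Δ²σ²} denote the density of N(G_{ij}, Δ²σ²) on ℝ. Then the integral over (Fin n × Fin d) → ℝ (with respect to Lebesgue measure) of ∏_{i<n} ∏_{j<d} p_{G_{ij}, Δ²σ²}(x_{ij})^α · p_{G'_{ij}, Δ²σ²}(x_{ij})^{1−α} is at most exp((α−1) · 2αn/σ²). Equivalently, the Rényi divergence of order α between the two product Gaussian output distributions is at most 2αn/σ², i.e. releasing the n noised, clipped rows satisfies (α, 2αn/σ²)-RDP. -/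
open Real MeasureTheory

/-- Density of the Gaussian measure `N(m, s²)` on `ℝ`, where `s` is the standard
deviation: `p_{m,s²}(x) = (s √(2π))⁻¹ exp (−(x−m)²/(2s²))`. -/
noncomputable def gaussPdf (m s : ℝ) (x : ℝ) : ℝ :=
  (s * Real.sqrt (2 * Real.pi))⁻¹ * Real.exp (-(x - m) ^ 2 / (2 * s ^ 2))

lemma integral_gaussPdf (m s : ℝ) (hs : 0 < s) : ∫ x : ℝ, gaussPdf m s x = 1 := by
  have h : gaussPdf m s = ProbabilityTheory.gaussianPDFReal m (NNReal.mk (s ^ 2) (sq_nonneg s)) := by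
    funext x
    simp only [gaussPdf, ProbabilityTheory.gaussianPDFReal, NNReal.coe_mk]
    rw [show 2 * Real.pi * s ^ 2 = s ^ 2 * (2 * Real.pi) by ring, Real.sqrt_mul (sq_nonneg s),
      Real.sqrt_sq hs.le]
  rw [h]
  exact ProbabilityTheory.integral_gaussianPDFReal_eq_one m
    (by simp [← NNReal.coe_ne_zero]; positivity)

lemma gauss_renyi_integral (m m' s α : ℝ) (hs : 0 < s) :
    ∫ x : ℝ, gaussPdf m s x ^ α * gaussPdf m' s x ^ (1 - α)
      = Real.exp (α * (α - 1) * (m - m') ^ 2 / (2 * s ^ 2)) := by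
  have hC : (0 : ℝ) < (s * Real.sqrt (2 * Real.pi))⁻¹ := by
    have := Real.sqrt_pos.2 Real.two_pi_pos
    positivity
  have key : ∀ x : ℝ, gaussPdf m s x ^ α * gaussPdf m' s x ^ (1 - α)
      = Real.exp (α * (α - 1) * (m - m') ^ 2 / (2 * s ^ 2)) *
        gaussPdf (α * m + (1 - α) * m') s x := by
    intro x
    simp only [gaussPdf]
    rw [Real.mul_rpow hC.le (Real.exp_nonneg _), Real.mul_rpow hC.le (Real.exp_nonneg _),
      ← Real.exp_mul, ← Real.exp_mul]
    have hc : (s * Real.sqrt (2 * Real.pi))⁻¹ ^ α * (s * Real.sqrt (2 * Real.pi))⁻¹ ^ (1 - α)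
        = (s * Real.sqrt (2 * Real.pi))⁻¹ := by
      rw [← Real.rpow_add hC]; ring_nf; exact Real.rpow_one _
    have hexp : Real.exp (-(x - m) ^ 2 / (2 * s ^ 2) * α) *
        Real.exp (-(x - m') ^ 2 / (2 * s ^ 2) * (1 - α))
        = Real.exp (α * (α - 1) * (m - m') ^ 2 / (2 * s ^ 2)) *
          Real.exp (-(x - (α * m + (1 - α) * m')) ^ 2 / (2 * s ^ 2)) := by
      rw [← Real.exp_add, ← Real.exp_add]
      congr 1
      have hs2 : s ^ 2 ≠ 0 := by positivity
      field_simp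
      ring
    calc (s * Real.sqrt (2 * Real.pi))⁻¹ ^ α * Real.exp (-(x - m) ^ 2 / (2 * s ^ 2) * α) *
          ((s * Real.sqrt (2 * Real.pi))⁻¹ ^ (1 - α) *
            Real.exp (-(x - m') ^ 2 / (2 * s ^ 2) * (1 - α)))
        = ((s * Real.sqrt (2 * Real.pi))⁻¹ ^ α * (s * Real.sqrt (2 * Real.pi))⁻¹ ^ (1 - α)) *
          (Real.exp (-(x - m) ^ 2 / (2 * s ^ 2) * α) *
            Real.exp (-(x - m') ^ 2 / (2 * s ^ 2) * (1 - α))) := by ring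
      _ = _ := by rw [hc, hexp]; ring
  simp_rw [key]
  rw [integral_const_mul, integral_gaussPdf _ _ hs, mul_one]

lemma row_sq_bound (d : ℕ) (Δ : ℝ) (hΔ : 0 < Δ) (a b : Fin d → ℝ)
    (ha : Real.sqrt (∑ j, a j ^ 2) ≤ Δ) (hb : Real.sqrt (∑ j, b j ^ 2) ≤ Δ) :
    ∑ j, (a j - b j) ^ 2 ≤ 4 * Δ ^ 2 := by
  have hA0 : (0 : ℝ) ≤ ∑ j, a j ^ 2 := Finset.sum_nonneg fun j _ => sq_nonneg _
  have hB0 : (0 : ℝ) ≤ ∑ j, b j ^ 2 := Finset.sum_nonneg fun j _ => sq_nonneg _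
  have hA : ∑ j, a j ^ 2 ≤ Δ ^ 2 := by
    have := Real.sq_sqrt hA0
    nlinarith [Real.sqrt_nonneg (∑ j, a j ^ 2)]
  have hB : ∑ j, b j ^ 2 ≤ Δ ^ 2 := by
    have := Real.sq_sqrt hB0
    nlinarith [Real.sqrt_nonneg (∑ j, b j ^ 2)]
  have hCS : (∑ j, a j * b j) ^ 2 ≤ (∑ j, a j ^ 2) * ∑ j, b j ^ 2 :=
    Finset.sum_mul_sq_le_sq_mul_sq _ _ _
  have hexp : ∑ j, (a j - b j) ^ 2
      = ∑ j, a j ^ 2 - 2 * (∑ j, a j * b j) + ∑ j, b j ^ 2 := by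
    have h : ∀ j, (a j - b j) ^ 2 = a j ^ 2 - 2 * (a j * b j) + b j ^ 2 := fun j => by ring
    simp_rw [h, Finset.sum_add_distrib, Finset.sum_sub_distrib, ← Finset.mul_sum]
  nlinarith [sq_nonneg ((∑ j, a j * b j) + Δ ^ 2)]

/-- **Quantitative core of DP-Sinkhorn's Theorem 1.**
If the `n` rows of the gradient matrices `G, G' : Fin n → Fin d → ℝ` are clipped to
L2-norm at most `Δ`, then the order-`α` Rényi integral between the corresponding
product Gaussian output distributions with per-coordinate noise `N(·, Δ²σ²)` is at
most `exp ((α−1) · 2αn/σ²)`: releasing the `n` noised, clipped rows satisfies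
`(α, 2αn/σ²)`-RDP. -/
theorem dp_sinkhorn_sanitized_gradient_rdp
    (n d : ℕ) (Δ σ α : ℝ) (hΔ : 0 < Δ) (hσ : 0 < σ) (hα : 1 < α)
    (G G' : Fin n → Fin d → ℝ)
    (hG : ∀ i, Real.sqrt (∑ j, G i j ^ 2) ≤ Δ)
    (hG' : ∀ i, Real.sqrt (∑ j, G' i j ^ 2) ≤ Δ) :
    (∫ x : Fin n × Fin d → ℝ,
        ∏ i : Fin n, ∏ j : Fin d,
          gaussPdf (G i j) (Δ * σ) (x (i, j)) ^ α *
            gaussPdf (G' i j) (Δ * σ) (x (i, j)) ^ (1 - α)) ≤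
      Real.exp ((α - 1) * (2 * α * n / σ ^ 2)) := by
  set s : ℝ := Δ * σ with hs_def
  have hs : 0 < s := mul_pos hΔ hσ
  have key : (∫ x : Fin n × Fin d → ℝ,
        ∏ i : Fin n, ∏ j : Fin d,
          gaussPdf (G i j) s (x (i, j)) ^ α * gaussPdf (G' i j) s (x (i, j)) ^ (1 - α))
      = ∏ p : Fin n × Fin d,
          ∫ y : ℝ, gaussPdf (G p.1 p.2) s y ^ α * gaussPdf (G' p.1 p.2) s y ^ (1 - α) := by
    rw [← MeasureTheory.integral_fintype_prod_eq_prod (ι := Fin n × Fin d)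
      (f := fun p y => gaussPdf (G p.1 p.2) s y ^ α * gaussPdf (G' p.1 p.2) s y ^ (1 - α))]
    congr 1
    funext x
    rw [Fintype.prod_prod_type]
  rw [key]
  have hval : ∀ p : Fin n × Fin d,
      (∫ y : ℝ, gaussPdf (G p.1 p.2) s y ^ α * gaussPdf (G' p.1 p.2) s y ^ (1 - α))
        = Real.exp (α * (α - 1) * (G p.1 p.2 - G' p.1 p.2) ^ 2 / (2 * s ^ 2)) :=
    fun p => gauss_renyi_integral _ _ _ _ hs
  simp_rw [hval, ← Real.exp_sum]
  rw [Real.exp_le_exp]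
  have hαα : 0 ≤ α * (α - 1) := by nlinarith
  have hrow : ∀ i : Fin n, ∑ j : Fin d, (G i j - G' i j) ^ 2 ≤ 4 * Δ ^ 2 :=
    fun i => row_sq_bound d Δ hΔ (G i) (G' i) (hG i) (hG' i)
  calc ∑ p : Fin n × Fin d, α * (α - 1) * (G p.1 p.2 - G' p.1 p.2) ^ 2 / (2 * s ^ 2)
      = ∑ i : Fin n, (α * (α - 1) / (2 * s ^ 2)) * ∑ j : Fin d, (G i j - G' i j) ^ 2 := by
        rw [Fintype.sum_prod_type]
        refine Finset.sum_congr rfl fun i _ => ?_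
        rw [Finset.mul_sum]
        exact Finset.sum_congr rfl fun j _ => by ring
    _ ≤ ∑ i : Fin n, (α * (α - 1) / (2 * s ^ 2)) * (4 * Δ ^ 2) := by
        refine Finset.sum_le_sum fun i _ => ?_
        exact mul_le_mul_of_nonneg_left (hrow i) (by positivity)
    _ = (α - 1) * (2 * α * n / σ ^ 2) := by
        rw [Finset.sum_const, Finset.card_univ, Fintype.card_fin, nsmul_eq_mul, hs_def]
        have hΔ2 : Δ ^ 2 ≠ 0 := by positivity
        have hσ2 : σ ^ 2 ≠ 0 := by positivity
        field_simp
        ring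
end

section
/- (Theorem 2, Gaussian mechanism (ε,δ)-DP.) Let ε ∈ (0,1), δ ∈ (0,1), Δ > 0 and c > 0 with c² > 2 log(1.25/δ), and let σ ≥ cΔ/ε. Then for any two means m, m' ∈ ℝ with |m − m'| ≤ Δ and any Borel measurable set S ⊆ ℝ, the Gaussian measures satisfy N(m, σ²)(S) ≤ e^ε · N(m', σ²)(S) + δ. -/
open Real MeasureTheory ProbabilityTheory

open scoped NNReal ENNReal

lemma gauss_neg_map (v : ℝ≥0) :
    (gaussianReal 0 v).map (fun x => -x) = gaussianReal 0 v := by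
  have h := gaussianReal_map_const_mul (μ := 0) (v := v) (-1)
  have h1 : (⟨(-1:ℝ)^2, sq_nonneg _⟩ : ℝ≥0) = 1 := by ext; norm_num
  simp only [h1, one_mul, mul_zero, neg_one_mul] at h
  rw [h]; congr 1; ext; simp

lemma gauss_half (v : ℝ≥0) (hv : v ≠ 0) :
    gaussianReal 0 v (Set.Ioi 0) = 1/2 := by
  have hzero : gaussianReal 0 v ({0} : Set ℝ) = 0 :=
    gaussianReal_absolutelyContinuous 0 hv (measure_singleton 0)
  have hneg : gaussianReal 0 v (Set.Iio 0) = gaussianReal 0 v (Set.Ioi 0) := by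
    conv_rhs => rw [← gauss_neg_map v]
    rw [Measure.map_apply measurable_neg measurableSet_Ioi]
    congr 1
    ext x
    simp [Set.mem_Ioi, Set.mem_Iio]
  have hIci : gaussianReal 0 v (Set.Ici 0) = gaussianReal 0 v (Set.Ioi 0) := by
    have hs : (Set.Ici (0:ℝ)) = Set.Ioi 0 ∪ {0} := by
      ext x; simp [le_iff_lt_or_eq, or_comm, eq_comm]
    rw [hs]
    refine le_antisymm ((measure_union_le _ _).trans ?_) (measure_mono Set.subset_union_left)
    rw [hzero, add_zero]
  have hcompl := measure_add_measure_compl (μ := gaussianReal 0 v) (s := Set.Iio (0:ℝ))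
    measurableSet_Iio
  rw [Set.compl_Iio, hIci, hneg] at hcompl
  have h2 : 2 * gaussianReal 0 v (Set.Ioi 0) = 1 := by
    rw [two_mul, hcompl, measure_univ]
  rw [(ENNReal.eq_div_iff two_ne_zero ENNReal.ofNat_ne_top).mpr h2]

lemma gauss_tail (v : ℝ≥0) (hv : v ≠ 0) (a : ℝ) (ha : 0 ≤ a) :
    gaussianReal 0 v (Set.Ioi a) ≤ ENNReal.ofReal (Real.exp (-a^2/(2*v)) / 2) := by
  have h1 : gaussianReal 0 v (Set.Ioi a) = gaussianReal (-a) v (Set.Ioi 0) := by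
    have hmap := gaussianReal_map_add_const (μ := -a) (v := v) a
    rw [neg_add_cancel] at hmap
    rw [← hmap, Measure.map_apply (measurable_add_const a) measurableSet_Ioi]
    congr 1
    ext x
    simp [Set.mem_Ioi]
  rw [h1, gaussianReal_apply _ hv]
  have hvpos : (0:ℝ) < v := by positivity
  calc ∫⁻ x in Set.Ioi 0, gaussianPDF (-a) v x
      ≤ ∫⁻ x in Set.Ioi 0,
          ENNReal.ofReal (Real.exp (-a^2/(2*v))) * gaussianPDF 0 v x := by
        refine setLIntegral_mono (measurable_const.mul (measurable_gaussianPDF 0 v))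
          (fun x hx => ?_)
        simp only [Set.mem_Ioi] at hx
        unfold gaussianPDF gaussianPDFReal
        rw [← ENNReal.ofReal_mul (by positivity)]
        refine ENNReal.ofReal_le_ofReal ?_
        have hexp : Real.exp (-(x - -a)^2/(2*(v:ℝ))) ≤
            Real.exp (-a^2/(2*(v:ℝ))) * Real.exp (-(x - 0)^2/(2*(v:ℝ))) := by
          rw [← Real.exp_add]
          refine Real.exp_le_exp.mpr ?_
          rw [← add_div]
          gcongr
          nlinarith
        nlinarith [inv_nonneg.mpr (Real.sqrt_nonneg (2*π*(v:ℝ))),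
          Real.exp_nonneg (-(x - -a)^2/(2*(v:ℝ)))]
    _ = ENNReal.ofReal (Real.exp (-a^2/(2*v))) * gaussianReal 0 v (Set.Ioi 0) := by
        rw [lintegral_const_mul _ (measurable_gaussianPDF 0 v), gaussianReal_apply _ hv]
    _ = ENNReal.ofReal (Real.exp (-a^2/(2*v)) / 2) := by
        rw [gauss_half v hv, ENNReal.ofReal_div_of_pos two_pos, ENNReal.ofReal_ofNat,
          mul_one_div]

lemma gauss_box (v : ℝ≥0) (hv : v ≠ 0) (u : ℝ) :
    gaussianReal 0 v (Set.Ioc u 0) ≤ ENNReal.ofReal ((-u) * (Real.sqrt (2*π*v))⁻¹) := by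
  have hvpos : (0:ℝ) < v := by positivity
  rw [gaussianReal_apply _ hv]
  calc ∫⁻ x in Set.Ioc u 0, gaussianPDF 0 v x
      ≤ ∫⁻ _ in Set.Ioc u 0, ENNReal.ofReal ((Real.sqrt (2*π*v))⁻¹) :=
        setLIntegral_mono measurable_const (fun x _ => by
          unfold gaussianPDF gaussianPDFReal
          refine ENNReal.ofReal_le_ofReal ?_
          have h1 : Real.exp (-(x - 0)^2/(2*(v:ℝ))) ≤ 1 := by
            rw [Real.exp_le_one_iff]
            exact div_nonpos_of_nonpos_of_nonneg (by nlinarith [sq_nonneg (x - 0)])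
              (by positivity)
          nlinarith [inv_nonneg.mpr (Real.sqrt_nonneg (2*π*(v:ℝ)))])
    _ = ENNReal.ofReal ((Real.sqrt (2*π*v))⁻¹) * volume (Set.Ioc u 0) :=
        setLIntegral_const _ _
    _ ≤ ENNReal.ofReal ((-u) * (Real.sqrt (2*π*v))⁻¹) := by
        rw [Real.volume_Ioc, ← ENNReal.ofReal_mul (by positivity)]
        exact ENNReal.ofReal_le_ofReal (le_of_eq (by ring))

lemma exp_half_le : Real.exp (1/2) ≤ 2.5 := by
  have h2 : Real.exp (1/2) * Real.exp (1/2) = Real.exp 1 := by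
    rw [← Real.exp_add]; norm_num
  nlinarith [Real.exp_one_lt_d9, Real.exp_pos (1/2 : ℝ)]

lemma exp_quarter_le : Real.exp (1/4) ≤ 1.3 := by
  have h4 : Real.exp (1/4) ^ 4 = Real.exp 1 := by
    rw [← Real.exp_nat_mul]; norm_num
  nlinarith [Real.exp_one_lt_d9, Real.exp_pos (1/4 : ℝ),
    sq_nonneg (Real.exp (1/4) + 1.3), sq_nonneg (Real.exp (1/4) - 1.3),
    sq_nonneg (Real.exp (1/4)^2 - 1.69)]

lemma delta_lb (δ c : ℝ) (hδ0 : 0 < δ) (hc2 : 2 * Real.log (1.25 / δ) < c^2) :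
    1.25 * Real.exp (-c^2/2) < δ := by
  have h1 : (1.25 : ℝ)/δ = Real.exp (Real.log (1.25/δ)) := (Real.exp_log (by positivity)).symm
  have h2 : Real.exp (Real.log (1.25/δ)) < Real.exp (c^2/2) := by
    apply Real.exp_lt_exp.mpr; linarith
  have h3 : (1.25:ℝ)/δ < Real.exp (c^2/2) := by rw [h1]; exact h2
  have h4 : Real.exp (c^2/2) * Real.exp (-c^2/2) = 1 := by
    rw [← Real.exp_add, show c^2/2 + -c^2/2 = 0 by ring, Real.exp_zero]
  have h5 : 1.25 < δ * Real.exp (c^2/2) := by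
    have := mul_lt_mul_of_pos_right h3 hδ0
    rw [div_mul_cancel₀ _ hδ0.ne'] at this
    linarith [this]
  have h6 : δ * (Real.exp (c^2/2) * Real.exp (-c^2/2)) = δ := by rw [h4, mul_one]
  nlinarith [Real.exp_pos (-c^2/2 : ℝ), Real.exp_pos (c^2/2 : ℝ)]

lemma num1 (ε δ c : ℝ) (hε0 : 0 < ε) (hε1 : ε < 1) (hδ0 : 0 < δ) (hc : 0 < c)
    (hc2 : 2 * Real.log (1.25 / δ) < c^2) (hb : 0 ≤ c - ε/(2*c)) :
    Real.exp (-(c - ε/(2*c))^2/2) / 2 ≤ δ := by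
  have hδc := delta_lb δ c hδ0 hc2
  have hcan : ε/(2*c) * (2*c) = ε := div_mul_cancel₀ _ (by positivity)
  have hb2 : c^2 - ε ≤ (c - ε/(2*c))^2 := by nlinarith [sq_nonneg (ε/(2*c))]
  have h5 : Real.exp (-(c - ε/(2*c))^2/2) ≤ Real.exp (ε/2) * Real.exp (-c^2/2) := by
    rw [← Real.exp_add]
    apply Real.exp_le_exp.mpr
    linarith
  have h6 : Real.exp (ε/2) ≤ 2.5 := by
    refine le_trans (Real.exp_le_exp.mpr ?_) exp_half_le
    linarith
  nlinarith [Real.exp_pos (-c^2/2 : ℝ), Real.exp_pos (ε/2)]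

lemma num2 (ε δ c : ℝ) (hε0 : 0 < ε) (hε1 : ε < 1) (hδ0 : 0 < δ) (hδ1 : δ < 1) (hc : 0 < c)
    (hc2 : 2 * Real.log (1.25 / δ) < c^2) (hb : c - ε/(2*c) < 0) :
    1/2 + (ε/(2*c) - c)/2 ≤ δ := by
  have hδc := delta_lb δ c hδ0 hc2
  have hcan : ε/(2*c) * (2*c) = ε := div_mul_cancel₀ _ (by positivity)
  have hc12 : c^2 < 1/2 := by nlinarith [div_pos hε0 (by positivity : (0:ℝ) < 2*c)]
  -- log (1.25/δ) ≥ 0.2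
  have hlog : (0.2:ℝ) ≤ Real.log (1.25/δ) := by
    have h125 : (1.25:ℝ) ≤ 1.25/δ := by
      rw [le_div_iff₀ hδ0]; nlinarith
    refine le_trans ?_ (Real.log_le_log (by norm_num) h125)
    rw [Real.le_log_iff_exp_le (by norm_num)]
    have h8 := Real.add_one_le_exp (-0.2 : ℝ)
    have h9 : Real.exp (-0.2 : ℝ) * Real.exp (0.2 : ℝ) = 1 := by
      rw [← Real.exp_add]; norm_num
    nlinarith [Real.exp_pos (0.2:ℝ)]
  have hc63 : (0.63:ℝ) ≤ c := by nlinarith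
  -- δ ≥ 1.25/1.3
  have hE : Real.exp (-c^2/2) * Real.exp (1/4) ≥ 1 := by
    have : Real.exp (-c^2/2 + 1/4) ≥ Real.exp 0 := Real.exp_le_exp.mpr (by linarith)
    rw [← Real.exp_add]; simpa using this
  have hδ96 : (0.96:ℝ) ≤ δ := by
    nlinarith [exp_quarter_le, Real.exp_pos (-c^2/2 : ℝ), Real.exp_pos (1/4 : ℝ)]
  have ht : ε/(2*c) ≤ 0.794 := by nlinarith [div_nonneg hε0.le (by positivity : (0:ℝ) ≤ 2*c)]
  linarith

set_option maxHeartbeats 1000000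

/-- **Theorem 2: the Gaussian mechanism satisfies `(ε,δ)`-DP.**
For `ε, δ ∈ (0,1)`, sensitivity bound `Δ > 0` and `c > 0` with `c² > 2 log(1.25/δ)`,
if `σ ≥ cΔ/ε` then for any means `m, m'` with `|m − m'| ≤ Δ` and any measurable
`S ⊆ ℝ`, `N(m,σ²)(S) ≤ e^ε · N(m',σ²)(S) + δ`. -/
theorem gaussian_mechanism_dp
    (ε δ Δ c σ : ℝ)
    (hε : ε ∈ Set.Ioo (0 : ℝ) 1) (hδ : δ ∈ Set.Ioo (0 : ℝ) 1)
    (hΔ : 0 < Δ) (hc : 0 < c) (hc2 : 2 * Real.log (1.25 / δ) < c ^ 2)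
    (hσ : c * Δ / ε ≤ σ)
    (m m' : ℝ) (hm : |m - m'| ≤ Δ)
    (S : Set ℝ) (hS : MeasurableSet S) :
    gaussianReal m (σ ^ 2).toNNReal S ≤
      ENNReal.ofReal (Real.exp ε) * gaussianReal m' (σ ^ 2).toNNReal S +
        ENNReal.ofReal δ := by
  obtain ⟨hε0, hε1⟩ := hε
  obtain ⟨hδ0, hδ1⟩ := hδ
  have hσ0 : 0 < σ := lt_of_lt_of_le (by positivity) hσ
  set v : ℝ≥0 := (σ ^ 2).toNNReal with hvdef
  have hv : v ≠ 0 := by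
    have : 0 < v := Real.toNNReal_pos.mpr (by positivity)
    exact this.ne'
  have hvr : ((v : ℝ)) = σ ^ 2 := Real.coe_toNNReal _ (sq_nonneg σ)
  have hvpos : (0:ℝ) < v := by rw [hvr]; positivity
  -- trivial case m = m'
  by_cases hmm : m = m'
  · subst hmm
    have h1 : (1:ℝ≥0∞) ≤ ENNReal.ofReal (Real.exp ε) := by
      rw [← ENNReal.ofReal_one]
      exact ENNReal.ofReal_le_ofReal (Real.one_le_exp hε0.le)
    calc gaussianReal m v S = 1 * gaussianReal m v S := (one_mul _).symm
      _ ≤ ENNReal.ofReal (Real.exp ε) * gaussianReal m v S := mul_le_mul_left h1 _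
      _ ≤ _ := le_self_add
  -- main case
  have hd : m - m' ≠ 0 := sub_ne_zero_of_ne hmm
  set s : ℝ := |m - m'| with hsdef
  have hs0 : 0 < s := abs_pos.mpr hd
  have hsΔ : s ≤ Δ := hm
  set a : ℝ := σ^2 * ε / s - s / 2 with hadef
  set B : Set ℝ := {x | (m - m') * (x - (m + m')/2) ≤ σ^2 * ε} with hBdef
  have hB : MeasurableSet B :=
    measurableSet_le (by fun_prop) measurable_const
  -- Step 2: density ratio bound on B
  have step2 : gaussianReal m v (S ∩ B) ≤
      ENNReal.ofReal (Real.exp ε) * gaussianReal m' v (S ∩ B) := by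
    rw [gaussianReal_apply _ hv, gaussianReal_apply _ hv,
      ← lintegral_const_mul _ (measurable_gaussianPDF m' v)]
    refine setLIntegral_mono (measurable_const.mul (measurable_gaussianPDF m' v))
      (fun x hx => ?_)
    have hxB : (m - m') * (x - (m + m')/2) ≤ σ^2 * ε := hx.2
    unfold gaussianPDF gaussianPDFReal
    rw [← ENNReal.ofReal_mul (Real.exp_nonneg ε)]
    refine ENNReal.ofReal_le_ofReal ?_
    have h2v : (0:ℝ) < 2 * (v:ℝ) := by positivity
    have key : -(x - m)^2 - -(x - m')^2 ≤ ε * (2 * (v:ℝ)) := by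
      rw [hvr]; nlinarith
    have h7 : (-(x - m)^2 - -(x - m')^2) / (2*(v:ℝ)) ≤ ε := (div_le_iff₀ h2v).mpr key
    have h8 : (-(x - m)^2 - -(x - m')^2) / (2*(v:ℝ)) =
        -(x - m)^2/(2*(v:ℝ)) - -(x - m')^2/(2*(v:ℝ)) := sub_div _ _ _
    have hexp : Real.exp (-(x - m)^2/(2*(v:ℝ))) ≤
        Real.exp ε * Real.exp (-(x - m')^2/(2*(v:ℝ))) := by
      rw [← Real.exp_add]
      refine Real.exp_le_exp.mpr ?_
      linarith
    nlinarith [inv_nonneg.mpr (Real.sqrt_nonneg (2*π*(v:ℝ))),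
      Real.exp_nonneg (-(x - m)^2/(2*(v:ℝ)))]
  -- Step 3 : tail bound
  have hBc : gaussianReal m v Bᶜ = gaussianReal 0 v (Set.Ioi a) := by
    have hcan : σ^2 * ε / s * s = σ^2 * ε := div_mul_cancel₀ _ hs0.ne'
    have hsa : s * a = σ^2 * ε - s^2/2 := by
      rw [hadef]; field_simp
    rcases lt_or_gt_of_ne hd with hdneg | hdpos
    · -- m - m' < 0, s = -(m - m')
      have hs : s = -(m - m') := abs_of_neg hdneg
      have hne : (0:ℝ) < -(m - m') := by linarith
      have hcan' : σ^2*ε/(-(m-m')) * (-(m-m')) = σ^2*ε := div_mul_cancel₀ _ hne.ne'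
      have hset : Bᶜ = Set.Iio (m - a) := by
        ext x
        simp only [hBdef, Set.mem_compl_iff, Set.mem_setOf_eq, not_le, Set.mem_Iio]
        rw [hadef, hs]
        constructor
        · intro h; nlinarith [h, hcan', hne]
        · intro h; nlinarith [h, hcan', hne]
      rw [hset]
      have hmap := gaussianReal_map_add_const (μ := 0) (v := v) m
      rw [zero_add] at hmap
      rw [← hmap, Measure.map_apply (measurable_add_const m) measurableSet_Iio]
      have hpre : (fun x => x + m) ⁻¹' Set.Iio (m - a) = Set.Iio (-a) := by
        ext x; simp only [Set.mem_preimage, Set.mem_Iio]; constructor <;> intro <;> linarith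
      rw [hpre]
      have hneg : gaussianReal 0 v (Set.Ioi a) = gaussianReal 0 v (Set.Iio (-a)) := by
        conv_lhs => rw [← gauss_neg_map v]
        rw [Measure.map_apply measurable_neg measurableSet_Ioi]
        congr 1
        ext x
        simp only [Set.mem_preimage, Set.mem_Ioi, Set.mem_Iio]
        constructor <;> intro <;> linarith
      exact hneg.symm
    · -- m - m' > 0, s = m - m'
      have hs : s = m - m' := abs_of_pos hdpos
      have hcan' : σ^2*ε/(m-m') * (m-m') = σ^2*ε := div_mul_cancel₀ _ (by linarith : (0:ℝ) < m - m').ne'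
      have hset : Bᶜ = Set.Ioi (m + a) := by
        ext x
        simp only [hBdef, Set.mem_compl_iff, Set.mem_setOf_eq, not_le, Set.mem_Ioi]
        rw [hadef, hs]
        constructor
        · intro h; nlinarith [h, hcan', hdpos]
        · intro h; nlinarith [h, hcan', hdpos]
      rw [hset]
      have hmap := gaussianReal_map_add_const (μ := 0) (v := v) m
      rw [zero_add] at hmap
      rw [← hmap, Measure.map_apply (measurable_add_const m) measurableSet_Ioi]
      congr 1
      ext x
      simp only [Set.mem_preimage, Set.mem_Ioi]
      constructor <;> intro <;> linarith
  set b : ℝ := c - ε/(2*c) with hbdef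
  have hab : σ * b ≤ a := by
    have h1 : c * Δ ≤ σ * ε := by
      rw [div_le_iff₀ hε0] at hσ; linarith
    have h2 : σ * c ≤ σ^2 * ε / Δ := by
      rw [le_div_iff₀ hΔ]; nlinarith
    have h3 : σ^2 * ε / Δ ≤ σ^2 * ε / s :=
      div_le_div_of_nonneg_left (by positivity) hs0 hsΔ
    have h4 : Δ ≤ σ * ε / c := by
      rw [le_div_iff₀ hc]; nlinarith
    have h6 : σ * ε / c / 2 = σ * ε / (2*c) := by ring
    have h7 : σ * b = σ * c - σ * ε / (2*c) := by rw [hbdef]; ring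
    rw [hadef]
    linarith
  have step3 : gaussianReal m v Bᶜ ≤ ENNReal.ofReal δ := by
    rw [hBc]
    rcases le_or_gt 0 b with hb | hb
    · have hσb : 0 ≤ σ * b := mul_nonneg hσ0.le hb
      calc gaussianReal 0 v (Set.Ioi a)
          ≤ gaussianReal 0 v (Set.Ioi (σ * b)) :=
            measure_mono (fun x hx => lt_of_le_of_lt hab hx)
        _ ≤ ENNReal.ofReal (Real.exp (-(σ*b)^2/(2*(v:ℝ))) / 2) := gauss_tail v hv _ hσb
        _ ≤ ENNReal.ofReal δ := by
            refine ENNReal.ofReal_le_ofReal ?_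
            have heq : -(σ*b)^2/(2*(v:ℝ)) = -b^2/2 := by
              rw [hvr]; field_simp
            rw [heq]
            exact num1 ε δ c hε0 hε1 hδ0 hc hc2 hb
    · have hsub : Set.Ioi a ⊆ Set.Ioc (σ*b) 0 ∪ Set.Ioi 0 := by
        intro x hx
        simp only [Set.mem_Ioi] at hx
        rcases le_or_gt x 0 with hx0 | hx0
        · exact Or.inl ⟨lt_of_le_of_lt hab hx, hx0⟩
        · exact Or.inr hx0
      have hsqrt : 2*σ ≤ Real.sqrt (2*π*(v:ℝ)) := by
        have hsq : (2*σ)^2 ≤ 2*π*(v:ℝ) := by rw [hvr]; nlinarith [Real.pi_gt_three]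
        calc 2*σ = Real.sqrt ((2*σ)^2) := (Real.sqrt_sq (by positivity)).symm
          _ ≤ _ := Real.sqrt_le_sqrt hsq
      have hinv : (Real.sqrt (2*π*(v:ℝ)))⁻¹ ≤ (2*σ)⁻¹ :=
        inv_anti₀ (by positivity) hsqrt
      have hbound : (-(σ*b)) * (Real.sqrt (2*π*(v:ℝ)))⁻¹ ≤ (-b)/2 := by
        have h9 : (-(σ*b)) * (2*σ)⁻¹ = (-b)/2 := by field_simp
        have h10 : 0 ≤ -(σ*b) := by nlinarith
        calc (-(σ*b)) * (Real.sqrt (2*π*(v:ℝ)))⁻¹ ≤ (-(σ*b)) * (2*σ)⁻¹ :=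
              mul_le_mul_of_nonneg_left hinv h10
          _ = (-b)/2 := h9
      have hhalf : ENNReal.ofReal (1/2 : ℝ) = (1/2 : ℝ≥0∞) := by
        rw [ENNReal.ofReal_div_of_pos two_pos, ENNReal.ofReal_one, ENNReal.ofReal_ofNat]
      calc gaussianReal 0 v (Set.Ioi a)
          ≤ gaussianReal 0 v (Set.Ioc (σ*b) 0 ∪ Set.Ioi 0) := measure_mono hsub
        _ ≤ gaussianReal 0 v (Set.Ioc (σ*b) 0) + gaussianReal 0 v (Set.Ioi 0) :=
            measure_union_le _ _
        _ ≤ ENNReal.ofReal ((-(σ*b)) * (Real.sqrt (2*π*(v:ℝ)))⁻¹) + 1/2 := by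
            exact add_le_add (gauss_box v hv _) (le_of_eq (gauss_half v hv))
        _ ≤ ENNReal.ofReal ((-b)/2) + ENNReal.ofReal (1/2) := by
            rw [hhalf]
            exact add_le_add_left (ENNReal.ofReal_le_ofReal hbound) _
        _ = ENNReal.ofReal ((-b)/2 + 1/2) := by
            rw [ENNReal.ofReal_add (div_nonneg (by linarith : (0:ℝ) ≤ -b) (by norm_num)) (by norm_num : (0:ℝ) ≤ 1/2)]
        _ ≤ ENNReal.ofReal δ := by
            refine ENNReal.ofReal_le_ofReal ?_
            have := num2 ε δ c hε0 hε1 hδ0 hδ1 hc hc2 hb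
            rw [hbdef]
            linarith
  -- assemble
  calc gaussianReal m v S
      ≤ gaussianReal m v (S ∩ B) + gaussianReal m v (S \ B) :=
        measure_le_inter_add_diff _ S B
    _ ≤ gaussianReal m v (S ∩ B) + gaussianReal m v Bᶜ :=
        add_le_add_right (measure_mono (fun x hx => hx.2)) _
    _ ≤ ENNReal.ofReal (Real.exp ε) * gaussianReal m' v (S ∩ B) + ENNReal.ofReal δ :=
        add_le_add step2 step3
    _ ≤ ENNReal.ofReal (Real.exp ε) * gaussianReal m' v S + ENNReal.ofReal δ :=
        add_le_add_left (mul_le_mul_right (measure_mono Set.inter_subset_left) _) _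
end

section
/- (RDP to DP conversion.) Let μ and ν be probability measures on a measurable space with μ ≪ ν, let α > 1 be real and δ ∈ (0,1), and suppose the order-α Rényi divergence satisfies (1/(α−1)) · log ∫ (dμ/dν)^α dν ≤ ε for some ε ≥ 0. Then for every measurable set S: μ(S) ≤ exp(ε + log(1/δ)/(α−1)) · ν(S) + δ. In other words, any mechanism satisfying (α, ε)-RDP also satisfies (ε + log(1/δ)/(α−1), δ)-DP. -/
open MeasureTheory ENNReal

/-- **RDP to DP conversion.**
Let `μ ≪ ν` be probability measures, `α > 1`, `δ ∈ (0,1)`, `ε ≥ 0`. If the order-`α`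
Rényi divergence satisfies `(α−1)⁻¹ log ∫ (dμ/dν)^α dν ≤ ε` (stated equivalently as
`∫ (dμ/dν)^α dν ≤ exp ((α−1)ε)`), then for every measurable `S`:
`μ(S) ≤ exp (ε + log(1/δ)/(α−1)) · ν(S) + δ`. -/
theorem rdp_to_dp
    {X : Type*} [MeasurableSpace X] (μ ν : Measure X)
    [IsProbabilityMeasure μ] [IsProbabilityMeasure ν] (hac : μ ≪ ν)
    (α ε δ : ℝ) (hα : 1 < α) (hδ : δ ∈ Set.Ioo (0 : ℝ) 1) (hε : 0 ≤ ε)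
    (hD : (∫⁻ x, μ.rnDeriv ν x ^ α ∂ν) ≤ ENNReal.ofReal (Real.exp ((α - 1) * ε))) :
    ∀ S : Set X, MeasurableSet S →
      μ S ≤ ENNReal.ofReal (Real.exp (ε + Real.log (1 / δ) / (α - 1))) * ν S +
        ENNReal.ofReal δ := by
  intro S hS
  have hα1 : (0:ℝ) < α - 1 := by linarith
  set c : ℝ := Real.exp (ε + Real.log (1 / δ) / (α - 1)) with hc
  have hc0 : 0 < c := Real.exp_pos _
  set C : ℝ≥0∞ := ENNReal.ofReal c with hCdef
  have hC0 : C ≠ 0 := by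
    simp only [hCdef, ne_eq, ENNReal.ofReal_eq_zero, not_le]
    exact hc0
  have hCtop : C ≠ ⊤ := ENNReal.ofReal_ne_top
  set f := μ.rnDeriv ν with hfdef
  have hfm : Measurable f := Measure.measurable_rnDeriv μ ν
  set T : Set X := f ⁻¹' Set.Ici C with hTdef
  have hTm : MeasurableSet T := hfm measurableSet_Ici
  -- pointwise bound on T
  have hpt : ∀ x ∈ T, f x ≤ C ^ (1 - α) * f x ^ α := by
    intro x hx
    have hxC : C ≤ f x := hx
    have hx0 : f x ≠ 0 := fun h => hC0 (le_antisymm (h ▸ hxC) zero_le)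
    rcases eq_or_ne (f x) ⊤ with htop | htop
    · rw [htop, ENNReal.top_rpow_of_pos (by linarith : (0:ℝ) < α),
        ENNReal.mul_top (by simp [ENNReal.rpow_eq_zero_iff, hC0, hCtop, not_lt.mpr (le_of_lt hα1), le_of_lt hα1])]
    · have h1 : f x * C ^ (α - 1) ≤ f x ^ α := by
        have heq : f x ^ α = f x ^ (1:ℝ) * f x ^ (α - 1) := by
          rw [← ENNReal.rpow_add _ _ hx0 htop]
          congr 1; ring
        rw [heq, ENNReal.rpow_one]
        exact mul_le_mul_right (ENNReal.rpow_le_rpow hxC (le_of_lt hα1)) _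
      calc f x = f x * (C ^ (α-1) * C ^ (1-α)) := by
              rw [← ENNReal.rpow_add _ _ hC0 hCtop]
              norm_num
        _ = (f x * C ^ (α-1)) * C ^ (1-α) := by ring
        _ ≤ f x ^ α * C ^ (1-α) := mul_le_mul_left h1 _
        _ = C ^ (1-α) * f x ^ α := mul_comm _ _
  -- bound μ T ≤ δ
  have hCrpow : C ^ (1-α) = ENNReal.ofReal (c ^ (1-α)) := by
    rw [hCdef, ← ENNReal.ofReal_rpow_of_pos hc0]
  have hne : α - 1 ≠ 0 := ne_of_gt hα1
  have hlogc : Real.log c = ε + Real.log (1/δ)/(α-1) := by rw [hc, Real.log_exp]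
  have hkey : c ^ (1-α) * Real.exp ((α - 1) * ε) = δ := by
    rw [Real.rpow_def_of_pos hc0, hlogc, ← Real.exp_add, one_div, Real.log_inv]
    rw [show (ε + -Real.log δ / (α-1)) * (1-α) + (α-1)*ε = Real.log δ by field_simp; ring]
    exact Real.exp_log hδ.1
  have hT_bound : μ T ≤ ENNReal.ofReal δ := by
    have h1 : μ T = ∫⁻ x in T, f x ∂ν := (Measure.setLIntegral_rnDeriv hac T).symm
    have h2 : ∫⁻ x in T, f x ∂ν ≤ ∫⁻ x in T, C ^ (1-α) * f x ^ α ∂ν :=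
      setLIntegral_mono' hTm hpt
    have hm : Measurable fun x => f x ^ α := hfm.pow_const α
    have h3 : ∫⁻ x in T, C ^ (1-α) * f x ^ α ∂ν = C ^ (1-α) * ∫⁻ x in T, f x ^ α ∂ν :=
      lintegral_const_mul _ hm
    have h4 : ∫⁻ x in T, f x ^ α ∂ν ≤ ∫⁻ x, f x ^ α ∂ν :=
      setLIntegral_le_lintegral _ _
    calc μ T ≤ C ^ (1-α) * ∫⁻ x in T, f x ^ α ∂ν := by rw [h1]; rw [h3] at h2; exact h2
      _ ≤ C ^ (1-α) * ENNReal.ofReal (Real.exp ((α - 1) * ε)) :=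
          mul_le_mul_right (le_trans h4 hD) _
      _ = ENNReal.ofReal δ := by
          rw [hCrpow, ← ENNReal.ofReal_mul (by positivity), hkey]
  -- main estimate
  calc μ S = ∫⁻ x in S, f x ∂ν := (Measure.setLIntegral_rnDeriv hac S).symm
    _ = ∫⁻ x in S ∩ T, f x ∂ν + ∫⁻ x in S \ T, f x ∂ν :=
        (lintegral_inter_add_diff f S hTm).symm
    _ ≤ ENNReal.ofReal δ + C * ν S := by
        gcongr ?_ + ?_
        · calc ∫⁻ x in S ∩ T, f x ∂ν ≤ ∫⁻ x in T, f x ∂ν :=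
                lintegral_mono_set Set.inter_subset_right
            _ = μ T := Measure.setLIntegral_rnDeriv hac T
            _ ≤ ENNReal.ofReal δ := hT_bound
        · calc ∫⁻ x in S \ T, f x ∂ν ≤ ∫⁻ _ in S \ T, C ∂ν :=
                setLIntegral_mono' (hS.diff hTm)
                  (fun x hx => le_of_lt (lt_of_not_ge fun h => hx.2 h))
            _ = C * ν (S \ T) := setLIntegral_const _ _
            _ ≤ C * ν S := mul_le_mul_right (measure_mono Set.diff_subset) _
    _ = C * ν S + ENNReal.ofReal δ := add_comm _ _
end

section
/- (Primal value equals dual value at the Sinkhorn fixed point.) Fix n, m ≥ 1, weight vectors μ ∈ ℝ^n and ν ∈ ℝ^m with μ_i > 0, ν_j > 0, Σ_i μ_i = 1, Σ_j ν_j = 1, a cost matrix C ∈ ℝ^{n×m}, and λ > 0. Suppose f ∈ ℝ^n and g ∈ ℝ^m satisfy the Sinkhorn fixed-point equations f_i = −λ log Σ_j ν_j exp((g_j − C_{ij})/λ) and g_j = −λ log Σ_i μ_i exp((f_i − C_{ij})/λ), and let P_{ij} = μ_i ν_j exp((f_i + g_j − C_{ij})/λ). Then the entropic primal objective at P equals the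 dual objective at (f, g): Σ_{i,j} C_{ij} P_{ij} + λ Σ_{i,j} P_{ij} log(P_{ij}/(μ_i ν_j)) = Σ_i μ_i f_i + Σ_j ν_j g_j. -/
open Real Finset

/-- **Primal value equals dual value at the Sinkhorn fixed point.**
If `f, g` satisfy the Sinkhorn fixed-point equations and
`P_{ij} = μ_i ν_j exp((f_i + g_j − C_{ij})/lam)`, then the entropic primal objective
at `P` equals the dual objective at `(f,g)`:
`Σ C_{ij} P_{ij} + lam Σ P_{ij} log(P_{ij}/(μ_i ν_j)) = ⟨μ,f⟩ + ⟨ν,g⟩`. -/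
theorem sinkhorn_primal_eq_dual
    (n m : ℕ) (hn : 1 ≤ n) (hm : 1 ≤ m)
    (μ : Fin n → ℝ) (ν : Fin m → ℝ)
    (hμ : ∀ i, 0 < μ i) (hν : ∀ j, 0 < ν j)
    (hμ1 : ∑ i, μ i = 1) (hν1 : ∑ j, ν j = 1)
    (C : Fin n → Fin m → ℝ) (lam : ℝ) (hlam : 0 < lam)
    (f : Fin n → ℝ) (g : Fin m → ℝ)
    (hf : ∀ i, f i = -lam * Real.log (∑ j, ν j * Real.exp ((g j - C i j) / lam)))
    (hg : ∀ j, g j = -lam * Real.log (∑ i, μ i * Real.exp ((f i - C i j) / lam)))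
    (P : Fin n → Fin m → ℝ)
    (hP : ∀ i j, P i j = μ i * ν j * Real.exp ((f i + g j - C i j) / lam)) :
    ∑ i, ∑ j, C i j * P i j +
        lam * ∑ i, ∑ j, P i j * Real.log (P i j / (μ i * ν j)) =
      ∑ i, μ i * f i + ∑ j, ν j * g j := by
  have hlog : ∀ i j, Real.log (P i j / (μ i * ν j)) = (f i + g j - C i j) / lam := by
    intro i j
    have h : P i j / (μ i * ν j) = Real.exp ((f i + g j - C i j) / lam) := by
      rw [hP i j, mul_comm, mul_div_assoc, div_self (mul_pos (hμ i) (hν j)).ne', mul_one]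
    rw [h, Real.log_exp]
  -- row marginals
  have hrow : ∀ i, ∑ j, P i j = μ i := by
    intro i
    have hS : 0 < ∑ j, ν j * Real.exp ((g j - C i j) / lam) := by
      apply Finset.sum_pos
      · intro j _; exact mul_pos (hν j) (Real.exp_pos _)
      · exact Finset.univ_nonempty_iff.2 ⟨⟨0, hm⟩⟩
    have hef : Real.exp (f i / lam) = (∑ j, ν j * Real.exp ((g j - C i j) / lam))⁻¹ := by
      rw [hf i]
      rw [show -lam * Real.log _ / lam = -Real.log (∑ j, ν j * Real.exp ((g j - C i j) / lam)) by
        field_simp]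
      rw [Real.exp_neg, Real.exp_log hS]
    calc ∑ j, P i j
        = μ i * Real.exp (f i / lam) * ∑ j, ν j * Real.exp ((g j - C i j) / lam) := by
          rw [Finset.mul_sum]
          apply Finset.sum_congr rfl
          intro j _
          rw [hP i j, show (f i + g j - C i j) / lam = f i / lam + (g j - C i j) / lam by ring,
            Real.exp_add]
          ring
      _ = μ i := by rw [hef, mul_assoc, inv_mul_cancel₀ (ne_of_gt hS), mul_one]
  -- column marginals
  have hcol : ∀ j, ∑ i, P i j = ν j := by
    intro j
    have hS : 0 < ∑ i, μ i * Real.exp ((f i - C i j) / lam) := by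
      apply Finset.sum_pos
      · intro i _; exact mul_pos (hμ i) (Real.exp_pos _)
      · exact Finset.univ_nonempty_iff.2 ⟨⟨0, hn⟩⟩
    have heg : Real.exp (g j / lam) = (∑ i, μ i * Real.exp ((f i - C i j) / lam))⁻¹ := by
      rw [hg j]
      rw [show -lam * Real.log _ / lam = -Real.log (∑ i, μ i * Real.exp ((f i - C i j) / lam)) by
        field_simp]
      rw [Real.exp_neg, Real.exp_log hS]
    calc ∑ i, P i j
        = Real.exp (g j / lam) * ∑ i, μ i * Real.exp ((f i - C i j) / lam) * ν j := by
          rw [Finset.mul_sum]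
          apply Finset.sum_congr rfl
          intro i _
          rw [hP i j, show (f i + g j - C i j) / lam = g j / lam + (f i - C i j) / lam by ring,
            Real.exp_add]
          ring
      _ = ν j := by
          rw [← Finset.sum_mul, ← mul_assoc, heg, inv_mul_cancel₀ (ne_of_gt hS), one_mul]
  have key : ∑ i, ∑ j, C i j * P i j +
      lam * ∑ i, ∑ j, P i j * Real.log (P i j / (μ i * ν j))
      = ∑ i, ∑ j, P i j * (f i + g j) := by
    rw [Finset.mul_sum]
    rw [← Finset.sum_add_distrib]
    apply Finset.sum_congr rfl
    intro i _
    rw [Finset.mul_sum, ← Finset.sum_add_distrib]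
    apply Finset.sum_congr rfl
    intro j _
    rw [hlog i j]
    field_simp
    ring
  rw [key]
  simp_rw [mul_add, Finset.sum_add_distrib]
  congr 1
  · simp_rw [← Finset.sum_mul, hrow]
  · rw [Finset.sum_comm]
    simp_rw [← Finset.sum_mul, hcol]
end
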